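/- Assume f is μ_A-strongly convex with respect to the atomic norm on lin(A), with μ_A > 0, and let x⋆ ∈ lin(A) be a minimizer of f over lin(A). Then for every x ∈ lin(A): (sup_{z∈A} ⟨−∇f(x), z⟩)² ≥ 2·μ_A·(f(x) − f(x⋆)). (Equivalently, the dual atomic norm of the component of the gradient along lin(A) satisfies a Polyak–Łojasiewicz-type inequality.) -/

import Mathlib

open Submodule Set Pointwise RealInnerProductSpace

/-- a Polyak–Łojasiewicz-type inequality for functions that are
`μ_A`-strongly convex w.r.t. the atomic norm on `lin(A)`: the squared dual atomic
norm of the negative gradient dominates `2 μ_A (f(x) − f(x⋆))`. -/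
theorem stmt_9 {H : Type*} [NormedAddCommGroup H] [InnerProductSpace ℝ H] [CompleteSpace H]
    (A : Set H) (hA : IsCompact A) (hsym : ∀ z ∈ A, -z ∈ A)
    (f : H → ℝ) (f' : H → H) (hgrad : ∀ x, HasGradientAt f (f' x) x)
    (hconv : ConvexOn ℝ univ f)
    (habs : ∀ x ∈ span ℝ A, ∃ c : ℝ, 0 < c ∧ x ∈ c • convexHull ℝ A)
    (hpos : ∀ x ∈ span ℝ A, x ≠ 0 → 0 < gauge (convexHull ℝ A) x)
    (μA : ℝ) (hμA : 0 < μA)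
    (hstrong : ∀ x ∈ span ℝ A, ∀ y ∈ span ℝ A,
      f x + ⟪f' x, y - x⟫ + μA / 2 * gauge (convexHull ℝ A) (y - x) ^ 2 ≤ f y)
    (xs : H) (hxs : xs ∈ span ℝ A) (hmin : ∀ y ∈ span ℝ A, f xs ≤ f y) :
    ∀ x ∈ span ℝ A,
      2 * μA * (f x - f xs) ≤ (sSup ((fun z => ⟪-f' x, z⟫) '' A)) ^ 2 := by
  intro x hx
  rcases A.eq_empty_or_nonempty with hAe | hAne
  · subst hAe
    simp only [Submodule.span_empty, Submodule.mem_bot] at hx hxs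
    subst hx; subst hxs
    simp [Real.sSup_empty]
  set v := -f' x with hv
  set D := sSup ((fun z => ⟪v, z⟫) '' A) with hD
  have hcont : Continuous fun z : H => ⟪v, z⟫ := continuous_const.inner continuous_id
  have hbdd : BddAbove ((fun z => ⟪v, z⟫) '' A) := (hA.image hcont).bddAbove
  have hDz : ∀ z ∈ A, ⟪v, z⟫ ≤ D := fun z hz => le_csSup hbdd ⟨z, hz, rfl⟩
  have hD0 : 0 ≤ D := by
    obtain ⟨z, hz⟩ := hAne
    rcases le_total 0 ⟪v, z⟫ with h | h
    · exact h.trans (hDz z hz)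
    · have h2 := hDz (-z) (hsym z hz)
      rw [inner_neg_right] at h2; linarith
  have hlin : IsLinearMap ℝ fun w : H => ⟪v, w⟫ :=
    ⟨fun a b => inner_add_right v a b, fun c a => real_inner_smul_right v a c⟩
  have hhull : ∀ u ∈ convexHull ℝ A, ⟪v, u⟫ ≤ D := fun u hu =>
    convexHull_min hDz (convex_halfSpace_le hlin D) hu
  -- dual-norm inequality on the span
  have hdual : ∀ w ∈ span ℝ A, ⟪v, w⟫ ≤ D * gauge (convexHull ℝ A) w := by
    intro w hw
    have hS : {r : ℝ | r ∈ Set.Ioi (0:ℝ) ∧ w ∈ r • convexHull ℝ A}.Nonempty := by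
      obtain ⟨c, hc, hcw⟩ := habs w hw
      exact ⟨c, hc, hcw⟩
    have key : ∀ ε > (0:ℝ), ⟪v, w⟫ ≤ D * gauge (convexHull ℝ A) w + D * ε := by
      intro ε hε
      have hlt : gauge (convexHull ℝ A) w < gauge (convexHull ℝ A) w + ε :=
        lt_add_of_pos_right _ hε
      rw [show gauge (convexHull ℝ A) w = sInf {r : ℝ | r ∈ Set.Ioi (0:ℝ) ∧
          w ∈ r • convexHull ℝ A} from gauge_def] at hlt
      obtain ⟨c, ⟨hc0, hcw⟩, hcl⟩ := exists_lt_of_csInf_lt hS hlt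
      obtain ⟨u, hu, rfl⟩ := hcw
      rw [real_inner_smul_right]
      have h1 : c * ⟪v, u⟫ ≤ c * D := by
        have := hhull u hu
        nlinarith [(Set.mem_Ioi.mp hc0).le]
      have h2 : c * D ≤ (gauge (convexHull ℝ A) (c • u) + ε) * D :=
        mul_le_mul_of_nonneg_right hcl.le hD0
      linarith [h2, (by ring : (gauge (convexHull ℝ A) (c • u) + ε) * D =
        D * gauge (convexHull ℝ A) (c • u) + D * ε)]
    rcases eq_or_lt_of_le hD0 with hD0' | hD0'
    · have := key 1 one_pos
      rw [← hD0'] at this ⊢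
      simpa using this
    · refine le_of_forall_pos_le_add ?_
      intro δ hδ
      have := key (δ / D) (div_pos hδ hD0')
      rwa [mul_div_cancel₀ _ (ne_of_gt hD0')] at this
  -- main argument
  have hw : xs - x ∈ span ℝ A := Submodule.sub_mem _ hxs hx
  have hst := hstrong x hx xs hxs
  set t := gauge (convexHull ℝ A) (xs - x) with ht
  have hib : ⟪v, xs - x⟫ ≤ D * t := hdual _ hw
  have hiv : ⟪v, xs - x⟫ = -⟪f' x, xs - x⟫ := by rw [hv, inner_neg_left]
  nlinarith [sq_nonneg (D - μA * t), hμA, hst]
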